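/- Let θ : ℝ → ℝ be nondecreasing and convex on [0,∞) with θ(0) = 0 and twice continuously differentiable on (0,∞) with θ', θ'' ≥ 0. Let J be a finite set and p : J → ℝ with p_j > 0. Let x, y : J → [0,1], t ∈ [0,1], and z = t·x + (1−t)·y. Suppose h_x, h_y, h_z ≥ 0 are the water levels of x, y, z respectively (i.e., h satisfies ∑_j min(p_j, h)·x_j = h, with h > 0 iff the respective vector has L1 norm exceeding 1), and define f(x), f(y), f(z) by f(u) = (∑_{j: p_j > h_u} u_j·(θ(p_j) − θ(h_u))) + θ(h_u). Then f(z) ≤ t·f(x) + (1−t)·f(y); i.e., f is convex on [0,1]^J. -/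

import Mathlib

open Topology Filter

/-- Gluing lemma: a function continuous on `[a,b]` with nonnegative derivative away from a
finite exceptional set is monotone on `[a,b]`. -/
private lemma monoGlue (f f' : ℝ → ℝ) (E : Finset ℝ) :
    ∀ a b : ℝ, ContinuousOn f (Set.Icc a b) →
    (∀ s ∈ Set.Ioo a b, s ∉ E → HasDerivAt f (f' s) s) →
    (∀ s ∈ Set.Ioo a b, s ∉ E → 0 ≤ f' s) →
    MonotoneOn f (Set.Icc a b) := by
  induction E using Finset.induction_on with
  | empty =>
    intro a b hc hd hnn
    apply monotoneOn_of_deriv_nonneg (convex_Icc a b) hc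
    · rw [interior_Icc]
      exact fun s hs => (hd s hs (by simp)).differentiableAt.differentiableWithinAt
    · rw [interior_Icc]
      intro s hs
      rw [(hd s hs (by simp)).deriv]
      exact hnn s hs (by simp)
  | insert e E' he IH =>
    intro a b hc hd hnn
    by_cases hmem : e ∈ Set.Ioo a b
    · have key : ∀ s ∈ Set.Ioo a b, s ≠ e → s ∉ E' → HasDerivAt f (f' s) s ∧ 0 ≤ f' s := by
        intro s hs hne hsE
        have hE : s ∉ insert e E' := by
          simp only [Finset.mem_insert, not_or]; exact ⟨hne, hsE⟩
        exact ⟨hd s hs hE, hnn s hs hE⟩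
      have h1 : MonotoneOn f (Set.Icc a e) := by
        refine IH a e (hc.mono (Set.Icc_subset_Icc_right hmem.2.le)) ?_ ?_ <;>
          intro s hs hsE <;>
          have := key s ⟨hs.1, hs.2.trans hmem.2⟩ (ne_of_lt hs.2) hsE
        exacts [this.1, this.2]
      have h2 : MonotoneOn f (Set.Icc e b) := by
        refine IH e b (hc.mono (Set.Icc_subset_Icc_left hmem.1.le)) ?_ ?_ <;>
          intro s hs hsE <;>
          have := key s ⟨hmem.1.trans hs.1, hs.2⟩ (ne_of_gt hs.1) hsE
        exacts [this.1, this.2]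
      intro u hu v hv huv
      rcases le_total v e with h | h
      · exact h1 ⟨hu.1, huv.trans h⟩ ⟨hv.1, h⟩ huv
      · rcases le_total u e with h' | h'
        · exact le_trans (h1 ⟨hu.1, h'⟩ ⟨hmem.1.le, le_refl e⟩ h')
            (h2 ⟨le_refl e, hmem.2.le⟩ ⟨h, hv.2⟩ h)
        · exact h2 ⟨h', hu.2⟩ ⟨h, hv.2⟩ huv
    · have key : ∀ s ∈ Set.Ioo a b, s ∉ E' → s ∉ insert e E' := by
        intro s hs hsE
        simp only [Finset.mem_insert, not_or]
        exact ⟨fun h => hmem (h ▸ hs), hsE⟩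
      exact IH a b hc (fun s hs hsE => hd s hs (key s hs hsE))
        (fun s hs hsE => hnn s hs (key s hs hsE))

/-- `θ` is continuous on `[0,∞)` (right-continuity at `0` from monotonicity and convexity). -/
private lemma thetaCont (θ θ' : ℝ → ℝ)
    (hmono : MonotoneOn θ (Set.Ici 0)) (hconv : ConvexOn ℝ (Set.Ici 0) θ)
    (hD1 : ∀ s : ℝ, 0 < s → HasDerivAt θ (θ' s) s) :
    ContinuousOn θ (Set.Ici 0) := by
  intro x hxx
  rcases eq_or_lt_of_le (Set.mem_Ici.1 hxx) with h | h
  · subst h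
    have hub : ∀ᶠ s in 𝓝[Set.Ici 0] (0:ℝ), θ s ≤ θ 0 + s * (θ 1 - θ 0) := by
      have h1 : ∀ᶠ s in 𝓝[Set.Ici 0] (0:ℝ), s < 1 :=
        (eventually_lt_nhds (by norm_num : (0:ℝ) < 1)).filter_mono nhdsWithin_le_nhds
      filter_upwards [h1, self_mem_nhdsWithin] with s hs1 hs0
      have := hconv.2 (Set.self_mem_Ici) (Set.mem_Ici.2 zero_le_one)
        (by linarith : (0:ℝ) ≤ 1 - s) (Set.mem_Ici.1 hs0) (by ring : (1 - s) + s = 1)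
      simp only [smul_eq_mul, mul_zero, mul_one, zero_add] at this
      linarith
    have hlb : ∀ᶠ s in 𝓝[Set.Ici 0] (0:ℝ), θ 0 ≤ θ s := by
      filter_upwards [self_mem_nhdsWithin] with s hs0
      exact hmono Set.self_mem_Ici hs0 (Set.mem_Ici.1 hs0)
    have hup : Filter.Tendsto (fun s : ℝ => θ 0 + s * (θ 1 - θ 0)) (𝓝[Set.Ici 0] (0:ℝ))
        (𝓝 (θ 0)) := by
      have : Filter.Tendsto (fun s : ℝ => θ 0 + s * (θ 1 - θ 0)) (𝓝 (0:ℝ))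
          (𝓝 (θ 0 + 0 * (θ 1 - θ 0))) :=
        (continuous_const.add (continuous_id.mul continuous_const)).tendsto 0
      simpa using this.mono_left nhdsWithin_le_nhds
    exact tendsto_of_tendsto_of_tendsto_of_le_of_le' tendsto_const_nhds hup hlb hub
  · exact (hD1 x h).continuousAt.continuousWithinAt

/-- The auxiliary functional `G(u,h)`, affine in `u`, agreeing with `fTheta` at the water
level and maximized (over `h ≥ 0`) at the water level. -/
private noncomputable def Gfun {J : Type*} [Fintype J] (θ θ' : ℝ → ℝ) (p u : J → ℝ) (h : ℝ) : ℝ :=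
  (∑ j, u j * (θ (p j) - θ (min (p j) h))) + θ h +
    θ' h * ((∑ j, min (p j) h * u j) - h)

section
variable {J : Type*} [Fintype J]

private lemma phi_nonneg (p u : J → ℝ) (hp : ∀ j, 0 < p j) (hu : ∀ j, 0 ≤ u j)
    (w : ℝ) (hw0 : 0 ≤ w) (water : ∑ j, min (p j) w * u j = w)
    (s : ℝ) (hs0 : 0 ≤ s) (hsw : s ≤ w) :
    0 ≤ (∑ j, min (p j) s * u j) - s := by
  rcases eq_or_lt_of_le hw0 with hw | hw
  · have hs : s = 0 := le_antisymm (hsw.trans hw.symm.le) hs0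
    subst hs
    have : ∀ j, min (p j) 0 * u j = 0 := fun j => by rw [min_eq_right (hp j).le, zero_mul]
    simp [this]
  · set lam := s / w with hlam
    have hl0 : 0 ≤ lam := div_nonneg hs0 hw.le
    have hl1 : lam ≤ 1 := (div_le_one hw).2 hsw
    have hsl : s = lam * w := by rw [hlam, div_mul_cancel₀ s hw.ne']
    have per : ∀ j, lam * (min (p j) w * u j) ≤ min (p j) s * u j := by
      intro j
      have key : lam * min (p j) w ≤ min (p j) s := by
        rcases le_total (p j) w with hj | hj
        · rw [min_eq_left hj]
          refine le_min ?_ ?_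
          · nlinarith [(hp j).le]
          · rw [hsl]; exact mul_le_mul_of_nonneg_left hj hl0
        · rw [min_eq_right hj, ← hsl, min_eq_right]
          rw [hsl]; nlinarith
      calc lam * (min (p j) w * u j) = (lam * min (p j) w) * u j := by ring
        _ ≤ min (p j) s * u j := mul_le_mul_of_nonneg_right key (hu j)
    have := Finset.sum_le_sum (fun j (_ : j ∈ Finset.univ) => per j)
    rw [← Finset.mul_sum, water, ← hsl] at this
    linarith

private lemma phi_nonpos (p u : J → ℝ) (hp : ∀ j, 0 < p j) (hu : ∀ j, 0 ≤ u j)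
    (w : ℝ) (hw0 : 0 ≤ w) (water : ∑ j, min (p j) w * u j = w)
    (hiff : 0 < w ↔ 1 < ∑ j, u j)
    (s : ℝ) (hsw : w ≤ s) :
    (∑ j, min (p j) s * u j) - s ≤ 0 := by
  have hs0 : 0 ≤ s := hw0.trans hsw
  rcases eq_or_lt_of_le hw0 with hw | hw
  · have hsum : ∑ j, u j ≤ 1 := by
      by_contra hc
      push_neg at hc
      exact absurd (hiff.mpr hc) (by rw [← hw]; exact lt_irrefl 0)
    have per : ∀ j, min (p j) s * u j ≤ s * u j := fun j =>
      mul_le_mul_of_nonneg_right (min_le_right _ _) (hu j)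
    have := Finset.sum_le_sum (fun j (_ : j ∈ Finset.univ) => per j)
    rw [← Finset.mul_sum] at this
    nlinarith
  · set mu := s / w with hmu
    have hm1 : 1 ≤ mu := (one_le_div hw).2 hsw
    have hsl : s = mu * w := by rw [hmu, div_mul_cancel₀ s hw.ne']
    have per : ∀ j, min (p j) s * u j ≤ mu * (min (p j) w * u j) := by
      intro j
      have key : min (p j) s ≤ mu * min (p j) w := by
        rcases le_total (p j) w with hj | hj
        · rw [min_eq_left hj, min_eq_left (hj.trans hsw)]
          nlinarith [(hp j).le]
        · rw [min_eq_right hj, ← hsl]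
          exact min_le_right _ _
      calc min (p j) s * u j ≤ (mu * min (p j) w) * u j :=
            mul_le_mul_of_nonneg_right key (hu j)
        _ = mu * (min (p j) w * u j) := by ring
    have := Finset.sum_le_sum (fun j (_ : j ∈ Finset.univ) => per j)
    rw [← Finset.mul_sum, water, ← hsl] at this
    linarith

private lemma Gcont (θ θ' : ℝ → ℝ) (p u : J → ℝ) (hp : ∀ j, 0 < p j)
    (θc : ContinuousOn θ (Set.Ici 0)) (hθ'cont : ContinuousOn θ' (Set.Ici 0)) :
    ContinuousOn (Gfun θ θ' p u) (Set.Ici 0) := by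
  unfold Gfun
  apply ContinuousOn.add
  apply ContinuousOn.add
  · apply continuousOn_finset_sum
    intro j _
    apply ContinuousOn.mul continuousOn_const
    apply ContinuousOn.sub continuousOn_const
    exact θc.comp ((continuous_const.min continuous_id).continuousOn)
      (fun h hh => Set.mem_Ici.2 (le_min (hp j).le (Set.mem_Ici.1 hh)))
  · exact θc
  · apply ContinuousOn.mul hθ'cont
    apply ContinuousOn.sub _ continuousOn_id
    apply continuousOn_finset_sum
    intro j _
    exact ((continuous_const.min continuous_id).continuousOn).mul continuousOn_const

private lemma Gderiv (θ θ' θ'' : ℝ → ℝ) (p u : J → ℝ)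
    (hD1 : ∀ s : ℝ, 0 < s → HasDerivAt θ (θ' s) s)
    (hD2 : ∀ s : ℝ, 0 < s → HasDerivAt θ' (θ'' s) s)
    (s : ℝ) (hs : 0 < s) (hps : ∀ j, p j ≠ s) :
    HasDerivAt (Gfun θ θ' p u) (θ'' s * ((∑ j, min (p j) s * u j) - s)) s := by
  have hW : HasDerivAt (fun h => ∑ j, min (p j) h * u j)
      (∑ j, if s < p j then u j else 0) s := by
    apply HasDerivAt.fun_sum
    intro j _
    rcases lt_or_gt_of_ne (hps j).symm with hj | hj
    · rw [if_pos hj]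
      have heq : (fun h : ℝ => min (p j) h * u j) =ᶠ[𝓝 s] fun h => h * u j := by
        filter_upwards [Iio_mem_nhds hj] with h hh
        rw [min_eq_right hh.le]
      simpa using ((hasDerivAt_id s).mul_const (u j)).congr_of_eventuallyEq heq
    · rw [if_neg (not_lt.2 hj.le)]
      have heq : (fun h : ℝ => min (p j) h * u j) =ᶠ[𝓝 s] fun _ => p j * u j := by
        filter_upwards [Ioi_mem_nhds hj] with h hh
        rw [min_eq_left hh.le]
      exact (hasDerivAt_const s (p j * u j)).congr_of_eventuallyEq heq
  have hT1 : HasDerivAt (fun h => ∑ j, u j * (θ (p j) - θ (min (p j) h)))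
      (∑ j, if s < p j then u j * -θ' s else 0) s := by
    apply HasDerivAt.fun_sum
    intro j _
    rcases lt_or_gt_of_ne (hps j).symm with hj | hj
    · rw [if_pos hj]
      have heq : (fun h : ℝ => u j * (θ (p j) - θ (min (p j) h))) =ᶠ[𝓝 s]
          fun h => u j * (θ (p j) - θ h) := by
        filter_upwards [Iio_mem_nhds hj] with h hh
        rw [min_eq_right hh.le]
      exact (((hD1 s hs).const_sub (θ (p j))).const_mul (u j)).congr_of_eventuallyEq heq
    · rw [if_neg (not_lt.2 hj.le)]
      have heq : (fun h : ℝ => u j * (θ (p j) - θ (min (p j) h))) =ᶠ[𝓝 s]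
          fun _ => u j * (θ (p j) - θ (p j)) := by
        filter_upwards [Ioi_mem_nhds hj] with h hh
        rw [min_eq_left hh.le]
      exact (hasDerivAt_const s _).congr_of_eventuallyEq heq
  have hG := (hT1.add (hD1 s hs)).add ((hD2 s hs).mul (hW.sub (hasDerivAt_id s)))
  have hGe : Gfun θ θ' p u = fun h => (∑ j, u j * (θ (p j) - θ (min (p j) h))) + θ h +
      θ' h * ((∑ j, min (p j) h * u j) - h) := rfl
  rw [hGe]
  refine HasDerivAt.congr_deriv hG ?_
  have hsum : (∑ j, if s < p j then u j * -θ' s else 0) =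
      -θ' s * ∑ j, if s < p j then u j else 0 := by
    rw [Finset.mul_sum]
    exact Finset.sum_congr rfl fun j _ => by split <;> ring
  rw [hsum]
  simp only [Pi.sub_apply, id_eq]
  ring

/-- Key inequality: `G(u, ·)` is maximized over `[0,∞)` at the water level `w` of `u`. -/
private lemma keyG (θ θ' θ'' : ℝ → ℝ)
    (hmono : MonotoneOn θ (Set.Ici 0)) (hconv : ConvexOn ℝ (Set.Ici 0) θ)
    (hD1 : ∀ s : ℝ, 0 < s → HasDerivAt θ (θ' s) s)
    (hD2 : ∀ s : ℝ, 0 < s → HasDerivAt θ' (θ'' s) s)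
    (hθ'cont : ContinuousOn θ' (Set.Ici 0))
    (hθ''nn : ∀ s : ℝ, 0 < s → 0 ≤ θ'' s)
    (p : J → ℝ) (hp : ∀ j, 0 < p j) (u : J → ℝ) (hu : ∀ j, 0 ≤ u j)
    (w : ℝ) (hw0 : 0 ≤ w) (water : ∑ j, min (p j) w * u j = w)
    (hiff : 0 < w ↔ 1 < ∑ j, u j)
    (h : ℝ) (hh : 0 ≤ h) :
    Gfun θ θ' p u h ≤ Gfun θ θ' p u w := by
  have θc := thetaCont θ θ' hmono hconv hD1
  have cont := Gcont θ θ' p u hp θc hθ'cont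
  set E := Finset.image p Finset.univ with hE
  have hEmem : ∀ s : ℝ, s ∉ E → ∀ j, p j ≠ s := by
    intro s hsE j hj
    exact hsE (Finset.mem_image.2 ⟨j, Finset.mem_univ j, hj⟩)
  rcases le_total h w with hcase | hcase
  · have mono : MonotoneOn (Gfun θ θ' p u) (Set.Icc 0 w) := by
      apply monoGlue _ (fun s => θ'' s * ((∑ j, min (p j) s * u j) - s)) E 0 w
        (cont.mono Set.Icc_subset_Ici_self)
      · intro s hs hsE
        exact Gderiv θ θ' θ'' p u hD1 hD2 s hs.1 (hEmem s hsE)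
      · intro s hs hsE
        exact mul_nonneg (hθ''nn s hs.1) (phi_nonneg p u hp hu w hw0 water s hs.1.le hs.2.le)
    exact mono ⟨hh, hcase⟩ ⟨hw0, le_refl w⟩ hcase
  · have hsub : Set.Icc w h ⊆ Set.Ici 0 := fun z hz => Set.mem_Ici.2 (hw0.trans hz.1)
    have mono : MonotoneOn (fun s => -Gfun θ θ' p u s) (Set.Icc w h) := by
      apply monoGlue _ (fun s => -(θ'' s * ((∑ j, min (p j) s * u j) - s))) E w h
        ((cont.mono hsub).neg)
      · intro s hs hsE
        exact (Gderiv θ θ' θ'' p u hD1 hD2 s (lt_of_le_of_lt hw0 hs.1) (hEmem s hsE)).neg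
      · intro s hs hsE
        have h1 := hθ''nn s (lt_of_le_of_lt hw0 hs.1)
        have h2 := phi_nonpos p u hp hu w hw0 water hiff s hs.1.le
        nlinarith
    have := mono ⟨le_refl w, hcase⟩ ⟨hcase, le_refl h⟩ hcase
    simpa using this

end

/-- The scheduling water-filling relaxation value `f(u)` computed with water level `hu`:
`f(u) = (∑_{j : p_j > h_u} u_j·(θ(p_j) − θ(h_u))) + θ(h_u)`. -/
noncomputable def fTheta {J : Type*} [Fintype J] (θ : ℝ → ℝ) (p u : J → ℝ) (hu : ℝ) : ℝ :=
  (∑ j ∈ Finset.univ.filter (fun j => hu < p j), u j * (θ (p j) - θ hu)) + θ hu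

private lemma fTheta_eq {J : Type*} [Fintype J] (θ θ' : ℝ → ℝ) (p u : J → ℝ)
    (w : ℝ) (water : ∑ j, min (p j) w * u j = w) :
    fTheta θ p u w = Gfun θ θ' p u w := by
  unfold fTheta Gfun
  rw [water, sub_self, mul_zero, add_zero]
  congr 1
  rw [Finset.sum_filter]
  apply Finset.sum_congr rfl
  intro j _
  split
  · next hj => rw [min_eq_right hj.le]
  · next hj => rw [min_eq_left (not_lt.1 hj), sub_self, mul_zero]

private lemma Glin {J : Type*} [Fintype J] (θ θ' : ℝ → ℝ) (p x y : J → ℝ) (t h : ℝ) :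
    Gfun θ θ' p (fun j => t * x j + (1 - t) * y j) h
      = t * Gfun θ θ' p x h + (1 - t) * Gfun θ θ' p y h := by
  unfold Gfun
  have h1 : ∑ j, (t * x j + (1 - t) * y j) * (θ (p j) - θ (min (p j) h))
      = t * (∑ j, x j * (θ (p j) - θ (min (p j) h)))
        + (1 - t) * (∑ j, y j * (θ (p j) - θ (min (p j) h))) := by
    rw [Finset.mul_sum, Finset.mul_sum, ← Finset.sum_add_distrib]
    exact Finset.sum_congr rfl fun j _ => by ring
  have h2 : ∑ j, min (p j) h * (t * x j + (1 - t) * y j)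
      = t * (∑ j, min (p j) h * x j) + (1 - t) * (∑ j, min (p j) h * y j) := by
    rw [Finset.mul_sum, Finset.mul_sum, ← Finset.sum_add_distrib]
    exact Finset.sum_congr rfl fun j _ => by ring
  rw [h1, h2]
  ring

/-- convexity of the scheduling relaxation value: for `θ` nondecreasing and
convex on `[0,∞)` with `θ(0) = 0` and twice continuously differentiable on `(0,∞)` with
nonnegative derivatives, and `z = t•x + (1−t)•y` with respective water levels
`hx, hy, hz`, we have `f(z) ≤ t·f(x) + (1−t)·f(y)`. -/
theorem stmt13 {J : Type*} [Fintype J]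
    (θ θ' θ'' : ℝ → ℝ)
    (hmono : MonotoneOn θ (Set.Ici 0)) (hconv : ConvexOn ℝ (Set.Ici 0) θ) (hθ0 : θ 0 = 0)
    (hD1 : ∀ s : ℝ, 0 < s → HasDerivAt θ (θ' s) s)
    (hD2 : ∀ s : ℝ, 0 < s → HasDerivAt θ' (θ'' s) s)
    (hθ'cont : ContinuousOn θ' (Set.Ici 0))
    (hθ''cont : ContinuousOn θ'' (Set.Ioi 0))
    (hθ'nn : ∀ s : ℝ, 0 < s → 0 ≤ θ' s)
    (hθ''nn : ∀ s : ℝ, 0 < s → 0 ≤ θ'' s)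
    (p : J → ℝ) (hp : ∀ j, 0 < p j)
    (x y : J → ℝ)
    (hx01 : ∀ j, x j ∈ Set.Icc (0 : ℝ) 1) (hy01 : ∀ j, y j ∈ Set.Icc (0 : ℝ) 1)
    (t : ℝ) (ht : t ∈ Set.Icc (0 : ℝ) 1)
    (hx hy hz : ℝ) (hx0 : 0 ≤ hx) (hy0 : 0 ≤ hy) (hz0 : 0 ≤ hz)
    (hxwater : ∑ j, min (p j) hx * x j = hx)
    (hywater : ∑ j, min (p j) hy * y j = hy)
    (hzwater : ∑ j, min (p j) hz * (t * x j + (1 - t) * y j) = hz)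
    (hxiff : 0 < hx ↔ 1 < ∑ j, x j)
    (hyiff : 0 < hy ↔ 1 < ∑ j, y j)
    (hziff : 0 < hz ↔ 1 < ∑ j, (t * x j + (1 - t) * y j)) :
    fTheta θ p (fun j => t * x j + (1 - t) * y j) hz ≤
      t * fTheta θ p x hx + (1 - t) * fTheta θ p y hy := by
  obtain ⟨ht0, ht1⟩ := ht
  rw [fTheta_eq θ θ' p _ hz hzwater, fTheta_eq θ θ' p x hx hxwater,
    fTheta_eq θ θ' p y hy hywater, Glin]
  have kx := keyG θ θ' θ'' hmono hconv hD1 hD2 hθ'cont hθ''nn p hp x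
    (fun j => (hx01 j).1) hx hx0 hxwater hxiff hz hz0
  have ky := keyG θ θ' θ'' hmono hconv hD1 hD2 hθ'cont hθ''nn p hp y
    (fun j => (hy01 j).1) hy hy0 hywater hyiff hz hz0
  exact add_le_add (mul_le_mul_of_nonneg_left kx ht0)
    (mul_le_mul_of_nonneg_left ky (by linarith))
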